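/- If δ ≥ 0 and α ≤ 2, then for all u₁ < u₂ and v₁ < v₂ in [0,1], c(u₁,v₁)·c(u₂,v₂) ≥ c(u₁,v₂)·c(u₂,v₁), where c(u,v) = 1 + δ·α²·(1-2u)(1-2v)·exp(α(u-u²+v-v²)). -/

import Mathlib

lemma g_hasDeriv (α u : ℝ) :
    HasDerivAt (fun u => (1 - 2*u) * Real.exp (α * (u - u^2)))
      ((α * (1 - 2*u)^2 - 2) * Real.exp (α * (u - u^2))) u := by
  have h1 : HasDerivAt (fun u : ℝ => 1 - 2*u) (-2) u := by
    simpa using ((hasDerivAt_id u).const_mul (2:ℝ)).const_sub 1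
  have h2 : HasDerivAt (fun u : ℝ => α * (u - u^2)) (α * (1 - 2*u)) u := by
    have : HasDerivAt (fun u : ℝ => u - u^2) (1 - 2*u) u := by
      simpa using (hasDerivAt_id u).fun_sub ((hasDerivAt_pow 2 u))
    simpa using this.const_mul α
  have h3 := h2.exp
  have := h1.fun_mul h3
  refine this.congr_deriv ?_
  ring

lemma g_anti (α : ℝ) (hα : α ≤ 2) :
    AntitoneOn (fun u => (1 - 2*u) * Real.exp (α * (u - u^2))) (Set.Icc 0 1) := by
  apply antitoneOn_of_deriv_nonpos (convex_Icc 0 1)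
  · exact Continuous.continuousOn (by continuity)
  · intro x hx
    exact (g_hasDeriv α x).differentiableAt.differentiableWithinAt
  · intro x hx
    rw [interior_Icc] at hx
    rw [(g_hasDeriv α x).deriv]
    have hsq : (1 - 2*x)^2 ≤ 1 := by nlinarith [hx.1, hx.2]
    have : α * (1 - 2*x)^2 - 2 ≤ 0 := by nlinarith [sq_nonneg (1 - 2*x)]
    exact mul_nonpos_of_nonpos_of_nonneg this (Real.exp_nonneg _)

theorem stmt_15 (α δ : ℝ) (hδ : δ ≥ 0) (hα : α ≤ 2) (c : ℝ → ℝ → ℝ)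
    (hc : ∀ u v, c u v = 1 + δ * α^2 * (1 - 2*u) * (1 - 2*v) * Real.exp (α * (u - u^2 + v - v^2))) :
    ∀ u₁ ∈ Set.Icc (0:ℝ) 1, ∀ u₂ ∈ Set.Icc (0:ℝ) 1, ∀ v₁ ∈ Set.Icc (0:ℝ) 1, ∀ v₂ ∈ Set.Icc (0:ℝ) 1,
      u₁ < u₂ → v₁ < v₂ → c u₁ v₁ * c u₂ v₂ ≥ c u₁ v₂ * c u₂ v₁ := by
  intro u₁ hu₁ u₂ hu₂ v₁ hv₁ v₂ hv₂ hu hv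
  set g : ℝ → ℝ := fun u => (1 - 2*u) * Real.exp (α * (u - u^2)) with hg
  have hc' : ∀ u v, c u v = 1 + δ * α^2 * (g u * g v) := by
    intro u v
    rw [hc u v, hg]
    simp only
    rw [show α * (u - u^2 + v - v^2) = α * (u - u^2) + α * (v - v^2) by ring, Real.exp_add]
    ring
  have h1 : g u₂ ≤ g u₁ := g_anti α hα hu₁ hu₂ hu.le
  have h2 : g v₂ ≤ g v₁ := g_anti α hα hv₁ hv₂ hv.le
  rw [hc' u₁ v₁, hc' u₂ v₂, hc' u₁ v₂, hc' u₂ v₁]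
  nlinarith [mul_nonneg (sub_nonneg.mpr h1) (sub_nonneg.mpr h2), sq_nonneg α,
    mul_nonneg hδ (sq_nonneg α)]
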